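/- The graph G_1 obtained from the 5-cycle by replacing each vertex with a triangle (with complete bipartite joins between consecutive triangles) satisfies Δ(G_1) = 8, ω(G_1) = 6, and χ(G_1) = 8. -/

import Mathlib

open SimpleGraph

/-- Maximum degree of a finite graph. -/
noncomputable def maxDeg {V : Type*} [Fintype V] (G : SimpleGraph V) : ℕ :=
  Finset.univ.sup fun v => (G.neighborSet v).ncard

/-- The graph `G₁`: five triangles arranged in a cycle, with complete bipartite
joins between consecutive triangles.  Vertex `(i, a)` lies in the `i`-th triangle. -/
def G1 : SimpleGraph (Fin 5 × Fin 3) where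
  Adj x y := x ≠ y ∧ (x.1 = y.1 ∨ x.1 = y.1 + 1 ∨ y.1 = x.1 + 1)
  symm := by
    constructor
    rintro x y ⟨hne, h⟩
    exact ⟨hne.symm, by tauto⟩
  loopless := by constructor; rintro x ⟨hne, -⟩; exact hne rfl

open Finset
instance : DecidableRel G1.Adj := fun x y => by unfold G1; simp only; infer_instance

lemma indep2 : ∀ x y z : Fin 5 × Fin 3, x ≠ y → x ≠ z → y ≠ z →
    ¬G1.Adj x y → ¬G1.Adj x z → ¬G1.Adj y z → False := by decide

lemma tri5 : ∀ i j k : Fin 5, i ≠ j → i ≠ k → j ≠ k →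
    (i = j ∨ i = j + 1 ∨ j = i + 1) → (i = k ∨ i = k + 1 ∨ k = i + 1) →
    (j = k ∨ j = k + 1 ∨ k = j + 1) → False := by decide

lemma clique_card_le (s : Finset (Fin 5 × Fin 3)) (hs : G1.IsClique s) : s.card ≤ 6 := by
  by_contra h
  push_neg at h
  have hfib : ∀ b ∈ s.image Prod.fst, #{a ∈ s | a.1 = b} ≤ 3 := by
    intro b _
    have : #{a ∈ s | a.1 = b} ≤ #(Finset.univ : Finset (Fin 3)) := by
      apply Finset.card_le_card_of_injOn Prod.snd (fun a _ => Finset.mem_univ _)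
      intro a ha c hc h2
      simp only [Finset.coe_filter, Set.mem_setOf_eq] at ha hc
      exact Prod.ext (ha.2.trans hc.2.symm) h2
    simpa using this
  have hbig := Finset.card_le_mul_card_image s 3 hfib
  have h3 : 3 ≤ #(s.image Prod.fst) := by omega
  obtain ⟨t, hts, htc⟩ := Finset.exists_subset_card_eq h3
  obtain ⟨i, j, k, hij, hik, hjk, rfl⟩ := Finset.card_eq_three.1 htc
  have hi := hts (by simp : i ∈ ({i,j,k} : Finset (Fin 5)))
  have hj := hts (by simp : j ∈ ({i,j,k} : Finset (Fin 5)))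
  have hk := hts (by simp : k ∈ ({i,j,k} : Finset (Fin 5)))
  obtain ⟨x, hxs, hx⟩ := Finset.mem_image.1 hi
  obtain ⟨y, hys, hy⟩ := Finset.mem_image.1 hj
  obtain ⟨z, hzs, hz⟩ := Finset.mem_image.1 hk
  subst hx hy hz
  have hxy := hs hxs hys (fun e => hij (congrArg Prod.fst e))
  have hxz := hs hxs hzs (fun e => hik (congrArg Prod.fst e))
  have hyz := hs hys hzs (fun e => hjk (congrArg Prod.fst e))
  exact tri5 x.1 y.1 z.1 hij hik hjk hxy.2 hxz.2 hyz.2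

lemma six_clique : G1.IsNClique 6
    ({((0:Fin 5),(0:Fin 3)),(0,1),(0,2),(1,0),(1,1),(1,2)} : Finset (Fin 5 × Fin 3)) := by
  rw [isNClique_iff, isClique_iff]
  constructor
  · intro x hx y hy hne
    simp only [Finset.coe_insert, Set.mem_insert_iff, Finset.coe_singleton,
      Set.mem_singleton_iff] at hx hy
    rcases hx with rfl|rfl|rfl|rfl|rfl|rfl <;> rcases hy with rfl|rfl|rfl|rfl|rfl|rfl <;>
      first | (exact absurd rfl hne) | exact ⟨hne, by decide⟩
  · decide

def col : Fin 5 × Fin 3 → Fin 8 := fun x =>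
  ![![0,1,2], ![3,4,5], ![0,1,6], ![2,3,7], ![4,5,6]] x.1 x.2

lemma col_valid : ∀ x y, G1.Adj x y → col x ≠ col y := by decide

lemma not_col7 : ¬ G1.Colorable 7 := by
  rintro ⟨C⟩
  have hcard : ∀ c ∈ (Finset.univ : Finset (Fin 7)),
      #{v ∈ (Finset.univ : Finset (Fin 5 × Fin 3)) | C v = c} ≤ 2 := by
    intro c _
    by_contra h
    push_neg at h
    obtain ⟨t, hts, htc⟩ := Finset.exists_subset_card_eq h
    obtain ⟨x, y, z, hxy, hxz, hyz, rfl⟩ := Finset.card_eq_three.1 htc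
    have hx := Finset.mem_filter.1 (hts (by simp : x ∈ ({x,y,z} : Finset _))) |>.2
    have hy := Finset.mem_filter.1 (hts (by simp : y ∈ ({x,y,z} : Finset _))) |>.2
    have hz := Finset.mem_filter.1 (hts (by simp : z ∈ ({x,y,z} : Finset _))) |>.2
    exact indep2 x y z hxy hxz hyz
      (fun ha => C.valid ha (hx.trans hy.symm))
      (fun ha => C.valid ha (hx.trans hz.symm))
      (fun ha => C.valid ha (hy.trans hz.symm))
  have := Finset.card_le_mul_card_image_of_maps_to
    (f := C) (t := (Finset.univ : Finset (Fin 7))) (fun a _ => Finset.mem_univ _) 2 hcard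
  simp [Finset.card_univ] at this

theorem stmt9 : maxDeg G1 = 8 ∧ G1.cliqueNum = 6 ∧ G1.chromaticNumber = 8 := by
  refine ⟨?_, ?_, ?_⟩
  · have h : ∀ v, (G1.neighborSet v).ncard = G1.degree v := by
      intro v
      rw [Set.ncard_eq_toFinset_card', SimpleGraph.degree]
      congr 1
    unfold maxDeg
    simp only [h]
    decide
  · apply le_antisymm
    · obtain ⟨s, hc, hcard⟩ := G1.exists_isNClique_cliqueNum
      rw [← hcard]
      exact clique_card_le s hc
    · have := IsClique.card_le_cliqueNum (G := G1) (tc := six_clique.1)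
      simpa [six_clique.2] using this
  · apply le_antisymm
    · have : G1.Colorable 8 := ⟨Coloring.mk col (fun {x y} ha => col_valid x y ha)⟩
      exact_mod_cast this.chromaticNumber_le
    · by_contra h
      push_neg at h
      have h7 : G1.chromaticNumber ≤ (7 : ℕ) := by
        exact_mod_cast Order.le_of_lt_add_one (by exact_mod_cast h)
      exact not_col7 (chromaticNumber_le_iff_colorable.1 h7)
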